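/- Let f_1,…,f_M be reals, f_add = ∑_i f_i, and ℓ: ℝ → ℝ differentiable. Then ℓ(y·f_add) = (1/M)∑_i ℓ(y·M·f_i) − (1/M)∑_i B_ℓ(M·f_i, f_add) for any y ∈ {−1,+1}, provided ℓ is gradient-symmetric. -/

import Mathlib

lemma stmt9_key (ℓ : ℝ → ℝ) (hd : Differentiable ℝ ℓ) (c : ℝ)
    (hgs : ∀ v : ℝ, deriv ℓ v + deriv ℓ (-v) = c) :
    ∀ v : ℝ, ℓ (-v) = ℓ v - c * v := by
  have hg : ∀ x : ℝ, HasDerivAt (fun x => ℓ (-x) - ℓ x + c * x) 0 x := by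
    intro x
    have h1 : HasDerivAt (fun x : ℝ => ℓ (-x)) (deriv ℓ (-x) * (-1)) x :=
      ((hd (-x)).hasDerivAt).comp x (hasDerivAt_neg x)
    have h2 := (hd x).hasDerivAt
    have h3 : HasDerivAt (fun x : ℝ => c * x) (c * 1) x :=
      (hasDerivAt_id x).const_mul c
    have h := (h1.sub h2).add h3
    have he : deriv ℓ (-x) * (-1) - deriv ℓ x + c * 1 = 0 := by
      have := hgs x; linarith
    rwa [he] at h
  have hdiff : Differentiable ℝ (fun x => ℓ (-x) - ℓ x + c * x) :=
    fun x => (hg x).differentiableAt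
  have hconst := is_const_of_deriv_eq_zero hdiff (fun x => (hg x).deriv)
  intro v
  have := hconst v 0
  simp only [neg_zero, mul_zero, add_zero, mul_comm] at this
  linarith

/-- Ambiguity decomposition for additive ensembles. -/
theorem stmt9 (ℓ : ℝ → ℝ) (hd : Differentiable ℝ ℓ) (hconv : StrictConvexOn ℝ Set.univ ℓ)
    (c : ℝ) (hgs : ∀ v : ℝ, deriv ℓ v + deriv ℓ (-v) = c)
    (y : ℝ) (hy : y = -1 ∨ y = 1) (M : ℕ) (hM : 1 ≤ M) (f : Fin M → ℝ) :
    ℓ (y * (∑ i, f i)) =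
      (∑ i, ℓ (y * (M * f i))) / M -
        (∑ i, (ℓ (M * f i) - ℓ (∑ j, f j)
          - deriv ℓ (∑ j, f j) * (M * f i - ∑ j, f j))) / M := by
  have hM0 : (M : ℝ) ≠ 0 := Nat.cast_ne_zero.mpr (by omega)
  set S : ℝ := ∑ i, f i with hS
  have hsum : ∑ i : Fin M, ((M : ℝ) * f i) = (M : ℝ) * S := by
    rw [Finset.mul_sum]
  have hbreg : ∑ i : Fin M, (ℓ ((M : ℝ) * f i) - ℓ S - deriv ℓ S * ((M : ℝ) * f i - S))
      = (∑ i : Fin M, ℓ ((M : ℝ) * f i)) - (M : ℝ) * ℓ S := by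
    rw [Finset.sum_sub_distrib, Finset.sum_sub_distrib, ← Finset.mul_sum,
      Finset.sum_sub_distrib, hsum]
    simp [Finset.card_univ]
  rcases hy with hy | hy
  · subst hy
    have hkey := stmt9_key ℓ hd c hgs
    have h1 : ∀ i : Fin M, ℓ ((-1 : ℝ) * ((M : ℝ) * f i)) = ℓ ((M : ℝ) * f i) - c * ((M : ℝ) * f i) := by
      intro i
      rw [neg_one_mul]
      exact hkey _
    have h2 : ℓ ((-1 : ℝ) * S) = ℓ S - c * S := by rw [neg_one_mul]; exact hkey _
    rw [h2, hbreg, Finset.sum_congr rfl (fun i _ => h1 i), Finset.sum_sub_distrib,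
      ← Finset.mul_sum, hsum]
    field_simp
    ring
  · subst hy
    simp only [one_mul]
    rw [hbreg]
    field_simp
    ring
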